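/- For every t ≥ 1 and every n ≥ 4t+2, the Hamming weights of the monomial rotation symmetric quadratic functions (0,t)_m satisfy the linear recursion wt((0,t)_n) + 2^(t+1)·wt((0,t)_{n−2t−1}) = 2·wt((0,t)_{n−1}) + 2^t·wt((0,t)_{n−2t}); that is, the weight sequence satisfies the recursion with recursion polynomial x^(2t+1) − 2x^(2t) − 2^t x + 2^(t+1) = (x−2)(x^(2t) − 2^t). -/

import Mathlib

/-- The monomial rotation symmetric quadratic function `(0,t)_n`:
`x ↦ ∑_{j=0}^{n-1} x_j * x_{(j+t) mod n}` over `ZMod 2`. -/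
def mrs (n t : ℕ) (x : Fin n → ZMod 2) : ZMod 2 :=
  ∑ j : Fin n, x j * x ⟨(j.val + t) % n, Nat.mod_lt _ j.pos⟩

/-- Hamming weight of a Boolean function in `n` variables. -/
noncomputable def wtB {n : ℕ} (f : (Fin n → ZMod 2) → ZMod 2) : ℕ :=
  Nat.card {x : Fin n → ZMod 2 // f x = 1}

def chi (a : ZMod 2) : ℤ := if a = 0 then 1 else -1

lemma chi_add' : ∀ a b : ZMod 2, chi (a + b) = chi a * chi b := by decide
lemma chi_add (a b : ZMod 2) : chi (a + b) = chi a * chi b := chi_add' a b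

lemma chi_sum {ι : Type*} (s : Finset ι) (f : ι → ZMod 2) :
    chi (∑ i ∈ s, f i) = ∏ i ∈ s, chi (f i) := by
  classical
  induction s using Finset.cons_induction with
  | empty => simp [chi]
  | cons a s ha ih => rw [Finset.sum_cons, Finset.prod_cons, chi_add, ih]

noncomputable def Sgn (n t : ℕ) : ℤ := ∑ x : Fin n → ZMod 2, chi (mrs n t x)

lemma two_wt (n t : ℕ) : (wtB (mrs n t) : ℤ) * 2 = 2 ^ n - Sgn n t := by
  classical
  have hw : wtB (mrs n t) = (Finset.univ.filter (fun x => mrs n t x = 1)).card := by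
    rw [wtB, Nat.card_eq_fintype_card, Fintype.card_subtype]
  have hcard : (Finset.univ.filter (fun x => mrs n t x = 1)).card
      + (Finset.univ.filter (fun x => ¬ mrs n t x = 1)).card = 2 ^ n := by
    rw [Finset.card_filter_add_card_filter_not]
    simp [Fintype.card_fun]
  have hs : Sgn n t = ∑ x ∈ Finset.univ.filter (fun x => mrs n t x = 1), chi (mrs n t x)
      + ∑ x ∈ Finset.univ.filter (fun x => ¬ mrs n t x = 1), chi (mrs n t x) :=
    (Finset.sum_filter_add_sum_filter_not _ _ _).symm
  have h1 : ∑ x ∈ Finset.univ.filter (fun x => mrs n t x = 1), chi (mrs n t x)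
      = -((Finset.univ.filter (fun x => mrs n t x = 1)).card : ℤ) := by
    have hh : ∀ x ∈ Finset.univ.filter (fun x => mrs n t x = 1), chi (mrs n t x) = -1 := by
      intro x hx
      have := (Finset.mem_filter.mp hx).2
      rw [this]; decide
    rw [Finset.sum_congr rfl hh, Finset.sum_const, nsmul_eq_mul, mul_neg_one]
  have h0 : ∑ x ∈ Finset.univ.filter (fun x => ¬ mrs n t x = 1), chi (mrs n t x)
      = ((Finset.univ.filter (fun x => ¬ mrs n t x = 1)).card : ℤ) := by
    have hh : ∀ x ∈ Finset.univ.filter (fun x => ¬ mrs n t x = 1), chi (mrs n t x) = 1 := by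
      intro x hx
      have h := (Finset.mem_filter.mp hx).2
      have hz : ∀ a : ZMod 2, ¬ a = 1 → a = 0 := by decide
      have h0 : mrs n t x = 0 := hz _ h
      rw [h0]; decide
    rw [Finset.sum_congr rfl hh, Finset.sum_const, nsmul_eq_mul, mul_one]
  rw [hs, h1, h0, hw]
  have hc : ((Finset.univ.filter (fun x => mrs n t x = 1)).card : ℤ)
      + ((Finset.univ.filter (fun x => ¬ mrs n t x = 1)).card : ℤ) = 2 ^ n := by
    exact_mod_cast hcard
  linarith

def glue (m t : ℕ)
    (p : (Fin m → ZMod 2) × (Fin t → ZMod 2) × (Fin t → ZMod 2))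
    (j : Fin (m + 2 * t)) : ZMod 2 :=
  if h : (j : ℕ) < m then p.1 ⟨j, h⟩
  else if h2 : (j : ℕ) < m + t then p.2.1 ⟨(j : ℕ) - m, by omega⟩
  else p.2.2 ⟨(j : ℕ) - m - t, by have := j.isLt; omega⟩

lemma glue_lo {m t : ℕ} (p) (j : Fin (m + 2 * t)) (hj : (j : ℕ) < m) :
    glue m t p j = p.1 ⟨j, hj⟩ := dif_pos hj

lemma glue_mid {m t : ℕ} (p) (j : Fin (m + 2 * t)) (h1 : ¬ (j : ℕ) < m)
    (h2 : (j : ℕ) < m + t) :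
    glue m t p j = p.2.1 ⟨(j : ℕ) - m, by omega⟩ := by
  rw [glue, dif_neg h1, dif_pos h2]

lemma glue_hi {m t : ℕ} (p) (j : Fin (m + 2 * t)) (h1 : ¬ (j : ℕ) < m)
    (h2 : ¬ (j : ℕ) < m + t) :
    glue m t p j = p.2.2 ⟨(j : ℕ) - m - t, by have := j.isLt; omega⟩ := by
  rw [glue, dif_neg h1, dif_neg h2]

lemma glue_bijective (m t : ℕ) : Function.Bijective (glue m t) := by
  rw [Function.bijective_iff_has_inverse]
  refine ⟨fun x => (fun i => x ⟨i, by have := i.isLt; omega⟩,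
      fun i => x ⟨m + i, by have := i.isLt; omega⟩,
      fun i => x ⟨m + t + i, by have := i.isLt; omega⟩), ?_, ?_⟩
  · rintro ⟨x', u, v⟩
    refine Prod.ext ?_ (Prod.ext ?_ ?_)
    · funext i
      have hi := i.isLt
      simp only
      rw [glue_lo _ _ (by simp only [Fin.val_mk]; omega)]
    · funext i
      have hi := i.isLt
      simp only
      rw [glue_mid _ _ (by simp only [Fin.val_mk]; omega) (by simp only [Fin.val_mk]; omega)]
      exact congrArg _ (Fin.eq_of_val_eq (by simp only [Fin.val_mk]; omega))
    · funext i
      have hi := i.isLt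
      simp only
      rw [glue_hi _ _ (by simp only [Fin.val_mk]; omega) (by simp only [Fin.val_mk]; omega)]
      exact congrArg _ (Fin.eq_of_val_eq (by simp only [Fin.val_mk]; omega))
  · intro x
    funext j
    have hj := j.isLt
    by_cases h1 : (j : ℕ) < m
    · rw [glue_lo _ _ h1]
    · by_cases h2 : (j : ℕ) < m + t
      · rw [glue_mid _ _ h1 h2]
        show x ⟨m + ((j : ℕ) - m), by omega⟩ = x j
        exact congrArg x (Fin.eq_of_val_eq (by simp only [Fin.val_mk]; omega))
      · rw [glue_hi _ _ h1 h2]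
        show x ⟨m + t + ((j : ℕ) - m - t), by omega⟩ = x j
        exact congrArg x (Fin.eq_of_val_eq (by simp only [Fin.val_mk]; omega))

lemma mrs_range {n : ℕ} (t : ℕ) (hn : 0 < n) (x : Fin n → ZMod 2) :
    mrs n t x = ∑ j ∈ Finset.range n,
      x ⟨j % n, Nat.mod_lt _ hn⟩ * x ⟨(j + t) % n, Nat.mod_lt _ hn⟩ := by
  rw [mrs, ← Fin.sum_univ_eq_sum_range
    (fun j => x ⟨j % n, Nat.mod_lt _ hn⟩ * x ⟨(j + t) % n, Nat.mod_lt _ hn⟩) n]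
  apply Finset.sum_congr rfl
  intro j _
  have h1 : (j : ℕ) % n = (j : ℕ) := Nat.mod_eq_of_lt j.isLt
  congr 1
  · simp [Fin.ext_iff, h1]

lemma glueN_lo {m t : ℕ} (p : (Fin m → ZMod 2) × (Fin t → ZMod 2) × (Fin t → ZMod 2))
    (j : ℕ) (h : j < m + 2 * t) (hj : j < m) :
    glue m t p ⟨j, h⟩ = p.1 ⟨j, hj⟩ := dif_pos hj

lemma glueN_mid {m t : ℕ} (p : (Fin m → ZMod 2) × (Fin t → ZMod 2) × (Fin t → ZMod 2))
    (j : ℕ) (h : j < m + 2 * t) (hj : j - m < t) (h1 : ¬ j < m) (h2 : j < m + t) :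
    glue m t p ⟨j, h⟩ = p.2.1 ⟨j - m, hj⟩ := by
  rw [glue_mid p ⟨j, h⟩ h1 h2]

lemma glueN_hi {m t : ℕ} (p : (Fin m → ZMod 2) × (Fin t → ZMod 2) × (Fin t → ZMod 2))
    (j : ℕ) (h : j < m + 2 * t) (hj : j - m - t < t) (h1 : ¬ j < m) (h2 : ¬ j < m + t) :
    glue m t p ⟨j, h⟩ = p.2.2 ⟨j - m - t, hj⟩ := by
  rw [glue_hi p ⟨j, h⟩ h1 h2]

lemma sum_shift {M : Type*} [AddCommMonoid M] (a b t : ℕ) (h : b - a = t)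
    (f : ℕ → M) (g : Fin t → M) (hfg : ∀ k : Fin t, f (a + (k : ℕ)) = g k) :
    ∑ j ∈ Finset.Ico a b, f j = ∑ k : Fin t, g k := by
  rw [Finset.sum_Ico_eq_sum_range, h, ← Fin.sum_univ_eq_sum_range (fun i => f (a + i)) t]
  exact Finset.sum_congr rfl (fun k _ => hfg k)

lemma mrs_glue (m t : ℕ) (ht : 1 ≤ t) (hm : 2 * t + 1 ≤ m)
    (x' : Fin m → ZMod 2) (u v : Fin t → ZMod 2) :
    mrs (m + 2 * t) t (glue m t (x', u, v)) =
      mrs m t x' + ∑ k : Fin t,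
        (x' ⟨(m - t + (k : ℕ)) % m, Nat.mod_lt _ (by omega)⟩
            * x' ⟨(k : ℕ) % m, Nat.mod_lt _ (by omega)⟩
          + x' ⟨(m - t + (k : ℕ)) % m, Nat.mod_lt _ (by omega)⟩ * u k
          + u k * v k
          + v k * x' ⟨(k : ℕ) % m, Nat.mod_lt _ (by omega)⟩) := by
  have hn : 0 < m + 2 * t := by omega
  have hmp : 0 < m := by omega
  set X := glue m t (x', u, v) with hX
  rw [mrs_range t hn, mrs_range t hmp, Finset.range_eq_Ico, Finset.range_eq_Ico,
    ← Finset.sum_Ico_consecutive _ (by omega : (0:ℕ) ≤ m + t) (by omega : m + t ≤ m + 2 * t),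
    ← Finset.sum_Ico_consecutive _ (by omega : (0:ℕ) ≤ m) (by omega : m ≤ m + t),
    ← Finset.sum_Ico_consecutive _ (by omega : (0:ℕ) ≤ m - t) (by omega : m - t ≤ m),
    ← Finset.sum_Ico_consecutive _ (by omega : (0:ℕ) ≤ m - t) (by omega : m - t ≤ m)]
  -- piece 1
  have h1 : (∑ j ∈ Finset.Ico 0 (m - t),
        X ⟨j % (m + 2 * t), Nat.mod_lt _ hn⟩ * X ⟨(j + t) % (m + 2 * t), Nat.mod_lt _ hn⟩)
      = ∑ j ∈ Finset.Ico 0 (m - t),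
        x' ⟨j % m, Nat.mod_lt _ hmp⟩ * x' ⟨(j + t) % m, Nat.mod_lt _ hmp⟩ := by
    refine Finset.sum_congr rfl (fun j hj => ?_)
    rw [Finset.mem_Ico] at hj
    have e1 : j % (m + 2 * t) = j := Nat.mod_eq_of_lt (by omega)
    have e2 : (j + t) % (m + 2 * t) = j + t := Nat.mod_eq_of_lt (by omega)
    have e3 : j % m = j := Nat.mod_eq_of_lt (by omega)
    have e4 : (j + t) % m = j + t := Nat.mod_eq_of_lt (by omega)
    simp only [e1, e2, e3, e4, hX]
    rw [glueN_lo _ _ _ (by omega), glueN_lo _ _ _ (by omega)]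
  -- piece 2
  have h2 : (∑ j ∈ Finset.Ico (m - t) m,
        X ⟨j % (m + 2 * t), Nat.mod_lt _ hn⟩ * X ⟨(j + t) % (m + 2 * t), Nat.mod_lt _ hn⟩)
      = ∑ k : Fin t, x' ⟨(m - t + (k : ℕ)) % m, Nat.mod_lt _ hmp⟩ * u k := by
    refine sum_shift _ _ _ (by omega) _ _ (fun k => ?_)
    have hk := k.isLt
    have e1 : (m - t + (k : ℕ)) % (m + 2 * t) = m - t + (k : ℕ) := Nat.mod_eq_of_lt (by omega)
    have e2 : (m - t + (k : ℕ) + t) % (m + 2 * t) = m + (k : ℕ) := by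
      rw [Nat.mod_eq_of_lt (by omega)]; omega
    have e3 : (m - t + (k : ℕ)) % m = m - t + (k : ℕ) := Nat.mod_eq_of_lt (by omega)
    simp only [e1, e2, e3, hX]
    rw [glueN_lo _ _ _ (by omega), glueN_mid _ _ _ (by omega) (by omega) (by omega)]
    exact congrArg (fun z => _ * u z) (Fin.eq_of_val_eq (by simp only [Fin.val_mk]; omega))
  -- piece 3
  have h3 : (∑ j ∈ Finset.Ico m (m + t),
        X ⟨j % (m + 2 * t), Nat.mod_lt _ hn⟩ * X ⟨(j + t) % (m + 2 * t), Nat.mod_lt _ hn⟩)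
      = ∑ k : Fin t, u k * v k := by
    refine sum_shift _ _ _ (by omega) _ _ (fun k => ?_)
    have hk := k.isLt
    have e1 : (m + (k : ℕ)) % (m + 2 * t) = m + (k : ℕ) := Nat.mod_eq_of_lt (by omega)
    have e2 : (m + (k : ℕ) + t) % (m + 2 * t) = m + (k : ℕ) + t := Nat.mod_eq_of_lt (by omega)
    simp only [e1, e2, hX]
    rw [glueN_mid _ _ _ (by omega) (by omega) (by omega),
      glueN_hi _ _ _ (by omega) (by omega) (by omega)]
    refine congrArg₂ (fun y z => u y * v z) ?_ ?_ <;>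
      exact Fin.eq_of_val_eq (by simp only [Fin.val_mk]; omega)
  -- piece 4
  have h4 : (∑ j ∈ Finset.Ico (m + t) (m + 2 * t),
        X ⟨j % (m + 2 * t), Nat.mod_lt _ hn⟩ * X ⟨(j + t) % (m + 2 * t), Nat.mod_lt _ hn⟩)
      = ∑ k : Fin t, v k * x' ⟨(k : ℕ) % m, Nat.mod_lt _ hmp⟩ := by
    refine sum_shift _ _ _ (by omega) _ _ (fun k => ?_)
    have hk := k.isLt
    have e1 : (m + t + (k : ℕ)) % (m + 2 * t) = m + t + (k : ℕ) := Nat.mod_eq_of_lt (by omega)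
    have e2 : (m + t + (k : ℕ) + t) % (m + 2 * t) = (k : ℕ) := by
      rw [show m + t + (k : ℕ) + t = (m + 2 * t) + (k : ℕ) by omega, Nat.add_mod_left]
      exact Nat.mod_eq_of_lt (by omega)
    have e3 : (k : ℕ) % m = (k : ℕ) := Nat.mod_eq_of_lt (by omega)
    simp only [e1, e2, e3, hX]
    rw [glueN_hi _ _ _ (by omega) (by omega) (by omega), glueN_lo _ _ _ (by omega)]
    exact congrArg (fun z => v z * _) (Fin.eq_of_val_eq (by simp only [Fin.val_mk]; omega))
  -- wrap piece of mrs m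
  have hW : (∑ j ∈ Finset.Ico (m - t) m,
        x' ⟨j % m, Nat.mod_lt _ hmp⟩ * x' ⟨(j + t) % m, Nat.mod_lt _ hmp⟩)
      = ∑ k : Fin t, x' ⟨(m - t + (k : ℕ)) % m, Nat.mod_lt _ hmp⟩
          * x' ⟨(k : ℕ) % m, Nat.mod_lt _ hmp⟩ := by
    refine sum_shift _ _ _ (by omega) _ _ (fun k => ?_)
    have hk := k.isLt
    have e1 : (m - t + (k : ℕ) + t) % m = (k : ℕ) % m := by
      rw [show m - t + (k : ℕ) + t = m + (k : ℕ) by omega, Nat.add_mod_left]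
    simp only [e1]
  rw [h1, h2, h3, h4, hW, Finset.sum_add_distrib, Finset.sum_add_distrib,
    Finset.sum_add_distrib]
  have key : ∀ a s2 s3 s4 w : ZMod 2,
      a + s2 + s3 + s4 = (a + w) + (w + s2 + s3 + s4) := by decide
  exact key _ _ _ _ _

lemma mrsPointSum : ∀ a b : ZMod 2,
    ∑ c : ZMod 2 × ZMod 2, chi (a * b + a * c.1 + c.1 * c.2 + c.2 * b) = 2 := by decide

lemma mrsPairBij (t : ℕ) :
    Function.Bijective (fun w : Fin t → ZMod 2 × ZMod 2 =>
      ((fun k => (w k).1, fun k => (w k).2) :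
        (Fin t → ZMod 2) × (Fin t → ZMod 2))) := by
  rw [Function.bijective_iff_has_inverse]
  exact ⟨fun p k => (p.1 k, p.2 k), fun w => rfl, fun p => rfl⟩

lemma mrsInnerSum (t : ℕ) (a b : Fin t → ZMod 2) :
    ∑ u : Fin t → ZMod 2, ∑ v : Fin t → ZMod 2,
      ∏ k : Fin t, chi (a k * b k + a k * u k + u k * v k + v k * b k) = 2 ^ t := by
  rw [← Fintype.sum_prod_type']
  rw [← Fintype.sum_bijective _ (mrsPairBij t)
    (fun w => ∏ k : Fin t, chi (a k * b k + a k * (w k).1 + (w k).1 * (w k).2 + (w k).2 * b k))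
    _ (fun w => rfl)]
  rw [← Fintype.prod_sum (fun (k : Fin t) (c : ZMod 2 × ZMod 2) =>
    chi (a k * b k + a k * c.1 + c.1 * c.2 + c.2 * b k))]
  rw [Finset.prod_congr rfl (fun k _ => mrsPointSum (a k) (b k))]
  simp

lemma sgn_rec (t m : ℕ) (ht : 1 ≤ t) (hm : 2 * t + 1 ≤ m) :
    Sgn (m + 2 * t) t = 2 ^ t * Sgn m t := by
  have hmp : 0 < m := by omega
  rw [Sgn, ← Fintype.sum_bijective (glue m t) (glue_bijective m t)
    (fun p => chi (mrs (m + 2 * t) t (glue m t p))) _ (fun p => rfl),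
    Fintype.sum_prod_type]
  have step : ∀ x' : Fin m → ZMod 2,
      (∑ q : (Fin t → ZMod 2) × (Fin t → ZMod 2),
        chi (mrs (m + 2 * t) t (glue m t (x', q)))) = 2 ^ t * chi (mrs m t x') := by
    intro x'
    rw [Fintype.sum_prod_type]
    have e1 : ∀ u v : Fin t → ZMod 2,
        chi (mrs (m + 2 * t) t (glue m t (x', u, v))) =
          chi (mrs m t x') * ∏ k : Fin t,
            chi (x' ⟨(m - t + (k : ℕ)) % m, Nat.mod_lt _ (by omega)⟩
                * x' ⟨(k : ℕ) % m, Nat.mod_lt _ (by omega)⟩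
              + x' ⟨(m - t + (k : ℕ)) % m, Nat.mod_lt _ (by omega)⟩ * u k
              + u k * v k
              + v k * x' ⟨(k : ℕ) % m, Nat.mod_lt _ (by omega)⟩) := by
      intro u v
      rw [mrs_glue m t ht hm x' u v, chi_add, chi_sum]
    calc (∑ u : Fin t → ZMod 2, ∑ v : Fin t → ZMod 2,
            chi (mrs (m + 2 * t) t (glue m t (x', u, v))))
        = ∑ u : Fin t → ZMod 2, ∑ v : Fin t → ZMod 2,
            chi (mrs m t x') * ∏ k : Fin t,
            chi (x' ⟨(m - t + (k : ℕ)) % m, Nat.mod_lt _ (by omega)⟩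
                * x' ⟨(k : ℕ) % m, Nat.mod_lt _ (by omega)⟩
              + x' ⟨(m - t + (k : ℕ)) % m, Nat.mod_lt _ (by omega)⟩ * u k
              + u k * v k
              + v k * x' ⟨(k : ℕ) % m, Nat.mod_lt _ (by omega)⟩) := by
          exact Finset.sum_congr rfl (fun u _ => Finset.sum_congr rfl (fun v _ => e1 u v))
      _ = chi (mrs m t x') * ∑ u : Fin t → ZMod 2, ∑ v : Fin t → ZMod 2,
            (∏ k : Fin t,
            chi (x' ⟨(m - t + (k : ℕ)) % m, Nat.mod_lt _ (by omega)⟩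
                * x' ⟨(k : ℕ) % m, Nat.mod_lt _ (by omega)⟩
              + x' ⟨(m - t + (k : ℕ)) % m, Nat.mod_lt _ (by omega)⟩ * u k
              + u k * v k
              + v k * x' ⟨(k : ℕ) % m, Nat.mod_lt _ (by omega)⟩)) := by
          rw [Finset.mul_sum]
          exact Finset.sum_congr rfl (fun u _ => (Finset.mul_sum _ _ _).symm)
      _ = chi (mrs m t x') * 2 ^ t := by
          rw [mrsInnerSum t (fun k => x' ⟨(m - t + (k : ℕ)) % m, Nat.mod_lt _ (by omega)⟩)
            (fun k => x' ⟨(k : ℕ) % m, Nat.mod_lt _ (by omega)⟩)]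
      _ = 2 ^ t * chi (mrs m t x') := mul_comm _ _
  rw [Finset.sum_congr rfl (fun x' _ => step x'), ← Finset.mul_sum, Sgn]


/-- The weights of `(0,t)_n` satisfy the linear recursion with recursion polynomial
`(x-2)(x^(2t) - 2^t) = x^(2t+1) - 2x^(2t) - 2^t x + 2^(t+1)`. -/
theorem mrs_weight_recursion (t n : ℕ) (ht : 1 ≤ t) (hn : 4 * t + 2 ≤ n) :
    wtB (mrs n t) + 2 ^ (t + 1) * wtB (mrs (n - (2 * t + 1)) t) =
      2 * wtB (mrs (n - 1) t) + 2 ^ t * wtB (mrs (n - 2 * t) t) := by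
  have r1 : Sgn n t = 2 ^ t * Sgn (n - 2 * t) t := by
    have h := sgn_rec t (n - 2 * t) ht (by omega)
    rwa [show n - 2 * t + 2 * t = n by omega] at h
  have r2 : Sgn (n - 1) t = 2 ^ t * Sgn (n - (2 * t + 1)) t := by
    have h := sgn_rec t (n - (2 * t + 1)) ht (by omega)
    rwa [show n - (2 * t + 1) + 2 * t = n - 1 by omega] at h
  have hp1 : (2 : ℤ) ^ n = 2 * 2 ^ (n - 1) := by
    rw [show n = 1 + (n - 1) by omega, pow_add]
    norm_num
  have hp2 : (2 : ℤ) ^ (t + 1) * 2 ^ (n - (2 * t + 1)) = 2 ^ t * 2 ^ (n - 2 * t) := by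
    rw [show n - 2 * t = (n - (2 * t + 1)) + 1 by omega, pow_succ, pow_succ]
    ring
  have final : ((wtB (mrs n t) : ℤ) + 2 ^ (t + 1) * wtB (mrs (n - (2 * t + 1)) t)) =
      2 * wtB (mrs (n - 1) t) + 2 ^ t * wtB (mrs (n - 2 * t) t) := by
    have final2 : (2 : ℤ) * ((wtB (mrs n t) : ℤ) + 2 ^ (t + 1) * wtB (mrs (n - (2 * t + 1)) t)) =
        2 * ((2 : ℤ) * wtB (mrs (n - 1) t) + 2 ^ t * wtB (mrs (n - 2 * t) t)) := by
      linear_combination (two_wt n t) + 2 ^ (t + 1) * two_wt (n - (2 * t + 1)) t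
        - 2 * two_wt (n - 1) t - 2 ^ t * two_wt (n - 2 * t) t + hp1 + hp2 - r1 + 2 * r2
    exact mul_left_cancel₀ two_ne_zero final2
  exact_mod_cast final
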